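/- Let 𝒢=(V,E) be a temporal graph, δ∈ℕ, v,w∈V, t∈ℕ, and y∈ℕ. Let E(v,w,t)={(v,w,t',λ)∈E : t'≥t} be nonempty and let a_1,…,a_ℓ be its elements listed in nondecreasing order of arrival time t(a)+λ(a). Then the maximum, over all delay sets D⊆E with |D|≤y, of the minimum over all arcs a∈E(v,w,t) of t(a)+λ(a)+[a∈D]·δ, equals min{ t(a_1)+λ(a_1)+δ , t(a_{y+1})+λ(a_{y+1}) }, where the second term is omitted when ℓ ≤ y. -/

import Mathlib

/-- A time arc of a temporal graph: start vertex, end vertex, time label, traversal time. -/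
structure TimeArc (V : Type) where
  src : V
  dst : V
  time : ℕ
  trav : ℕ
deriving DecidableEq

variable {V : Type}

/-- `P` is a `D`-traversal-delayed temporal walk in the temporal graph with time-arc set `E`
(with delay time `δ`). -/
def IsTDWalk [DecidableEq V] (E D : Finset (TimeArc V)) (δ : ℕ)
    (P : List (TimeArc V)) : Prop :=
  (∀ e ∈ P, e ∈ E) ∧
  P.Chain' (fun e f => f.src = e.dst ∧
    e.time + e.trav + (if e ∈ D then δ else 0) ≤ f.time)

/-- `P` is a `D`-starting-delayed temporal walk in the temporal graph with time-arc set `E`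
(with delay time `δ`). -/
def IsSDWalk [DecidableEq V] (E D : Finset (TimeArc V)) (δ : ℕ)
    (P : List (TimeArc V)) : Prop :=
  (∀ e ∈ P, e ∈ E) ∧
  P.Chain' (fun e f => f.src = e.dst ∧
    e.time + e.trav + (if e ∈ D then δ else 0) ≤ f.time + (if f ∈ D then δ else 0))

/-- The sequence of vertices visited by a walk: the start vertex of its first arc followed by
the end vertices of all its arcs. -/
def visits : List (TimeArc V) → List V
  | [] => []
  | e :: es => e.src :: (e :: es).map TimeArc.dst

/-- The walk `P` follows the route `R`: the visited vertex sequence of `P` equals `R`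
(the empty walk follows every single-vertex route). -/
def Follows (P : List (TimeArc V)) (R : List V) : Prop :=
  match P with
  | [] => ∃ v, R = [v]
  | e :: es => visits (e :: es) = R

/-- `R` is a `D`-traversal-delayed route: some `D`-traversal-delayed temporal walk follows `R`. -/
def IsTDRoute [DecidableEq V] (E D : Finset (TimeArc V)) (δ : ℕ) (R : List V) : Prop :=
  ∃ P : List (TimeArc V), IsTDWalk E D δ P ∧ Follows P R

/-- `R` is a `D`-starting-delayed route: some `D`-starting-delayed temporal walk follows `R`. -/
def IsSDRoute [DecidableEq V] (E D : Finset (TimeArc V)) (δ : ℕ) (R : List V) : Prop :=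
  ∃ P : List (TimeArc V), IsSDWalk E D δ P ∧ Follows P R

/-- `R` is `x`-traversal-delay-robust: it is a `D`-traversal-delayed route for every
`D ⊆ E` with `|D| ≤ x`. -/
def TDRobust [DecidableEq V] (E : Finset (TimeArc V)) (δ x : ℕ) (R : List V) : Prop :=
  ∀ D : Finset (TimeArc V), D ⊆ E → D.card ≤ x → IsTDRoute E D δ R

/-- `R` is `x`-starting-delay-robust: it is a `D`-starting-delayed route for every
`D ⊆ E` with `|D| ≤ x`. -/
def SDRobust [DecidableEq V] (E : Finset (TimeArc V)) (δ x : ℕ) (R : List V) : Prop :=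
  ∀ D : Finset (TimeArc V), D ⊆ E → D.card ≤ x → IsSDRoute E D δ R

theorem statement7 {V : Type} [DecidableEq V] (E : Finset (TimeArc V)) (δ : ℕ)
    (v w : V) (t y : ℕ)
    (hne : (E.filter (fun a => a.src = v ∧ a.dst = w ∧ t ≤ a.time)).Nonempty)
    (L : List (TimeArc V)) (hnd : L.Nodup)
    (hset : L.toFinset = E.filter (fun a => a.src = v ∧ a.dst = w ∧ t ≤ a.time))
    (hsorted : L.Pairwise (fun a b => a.time + a.trav ≤ b.time + b.trav))
    (a1 : TimeArc V) (ha1 : L.head? = some a1) :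
    (E.powerset.filter (fun D => D.card ≤ y)).sup' ⟨∅, by simp⟩
      (fun D => (E.filter (fun a => a.src = v ∧ a.dst = w ∧ t ≤ a.time)).inf' hne
        (fun a => a.time + a.trav + if a ∈ D then δ else 0)) =
    if h : y < L.length then
      min (a1.time + a1.trav + δ) ((L.get ⟨y, h⟩).time + (L.get ⟨y, h⟩).trav)
    else a1.time + a1.trav + δ := by
  classical
  have hmemL : ∀ a, a ∈ L ↔ a ∈ E.filter (fun a => a.src = v ∧ a.dst = w ∧ t ≤ a.time) := by
    intro a; rw [← hset, List.mem_toFinset]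
  have hLne : L ≠ [] := by
    intro h; rw [h] at ha1; simp at ha1
  have hl0 : ∃ h : 0 < L.length, L.get ⟨0, h⟩ = a1 := by
    cases L with
    | nil => simp at ha1
    | cons b tl =>
      simp only [List.head?_cons, Option.some.injEq] at ha1
      exact ⟨Nat.succ_pos _, ha1⟩
  obtain ⟨h0, hl0⟩ := hl0
  have hmono : ∀ (i j : Fin L.length), (i : ℕ) ≤ (j : ℕ) →
      (L.get i).time + (L.get i).trav ≤ (L.get j).time + (L.get j).trav := by
    intro i j hij
    rcases lt_or_eq_of_le hij with h | h
    · exact hsorted.rel_get_of_lt h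
    · have : i = j := Fin.ext h
      rw [this]
  apply le_antisymm
  · apply Finset.sup'_le
    intro D hD
    simp only [Finset.mem_filter, Finset.mem_powerset] at hD
    obtain ⟨hDE, hDy⟩ := hD
    have ha1F : a1 ∈ E.filter (fun a => a.src = v ∧ a.dst = w ∧ t ≤ a.time) :=
      (hmemL a1).1 (hl0 ▸ L.get_mem _)
    have h1 : (E.filter (fun a => a.src = v ∧ a.dst = w ∧ t ≤ a.time)).inf' hne
        (fun a => a.time + a.trav + if a ∈ D then δ else 0) ≤ a1.time + a1.trav + δ := by
      refine le_trans (Finset.inf'_le _ ha1F) ?_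
      split <;> omega
    by_cases hy : y < L.length
    · rw [dif_pos hy]
      refine le_min h1 ?_
      have hnd' : (L.take (y+1)).Nodup := hnd.sublist (List.take_sublist _ _)
      have hT : ((L.take (y+1)).toFinset).card = y + 1 := by
        rw [List.toFinset_card_of_nodup hnd', List.length_take]
        omega
      have hns : ¬ (L.take (y+1)).toFinset ⊆ D := by
        intro hsub
        have := Finset.card_le_card hsub
        omega
      obtain ⟨a, haT, haD⟩ := Finset.not_subset.1 hns
      rw [List.mem_toFinset] at haT
      obtain ⟨i, hi, ha⟩ := List.getElem_of_mem haT
      have hilen : i < L.length := lt_of_lt_of_le hi (by rw [List.length_take]; omega)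
      have ha' : L[i] = a := by
        rw [← ha, List.getElem_take]
      have haF : a ∈ E.filter (fun a => a.src = v ∧ a.dst = w ∧ t ≤ a.time) :=
        (hmemL a).1 (ha' ▸ List.getElem_mem hilen)
      refine le_trans (Finset.inf'_le _ haF) ?_
      have hiy : i ≤ y := by
        have := hi
        rw [List.length_take] at this
        omega
      have := hmono ⟨i, hilen⟩ ⟨y, hy⟩ hiy
      simp only [List.get_eq_getElem] at this ⊢
      rw [ha'] at this
      simp only [if_neg haD]
      omega
    · rw [dif_neg hy]
      exact h1
  · set D0 : Finset (TimeArc V) := (L.take y).toFinset with hD0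
    have hmemD0 : ∀ a, a ∈ D0 ↔ a ∈ L.take y := by
      intro a; rw [hD0, List.mem_toFinset]
    have hD0E : D0 ⊆ E := by
      intro a ha
      rw [hmemD0] at ha
      have : a ∈ L := List.mem_of_mem_take ha
      exact Finset.mem_of_mem_filter a ((hmemL a).1 this)
    have hD0y : D0.card ≤ y := by
      calc D0.card ≤ (L.take y).length := List.toFinset_card_le _
        _ ≤ y := by rw [List.length_take]; omega
    have hD0mem : D0 ∈ E.powerset.filter (fun D => D.card ≤ y) := by
      simp only [Finset.mem_filter, Finset.mem_powerset]
      exact ⟨hD0E, hD0y⟩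
    refine le_trans ?_ (Finset.le_sup' _ hD0mem)
    apply Finset.le_inf'
    intro a haF
    have haL : a ∈ L := (hmemL a).2 haF
    obtain ⟨i, hilen, ha⟩ := List.getElem_of_mem haL
    by_cases haD : a ∈ D0
    · rw [if_pos haD]
      have h01 : a1.time + a1.trav ≤ a.time + a.trav := by
        have := hmono ⟨0, h0⟩ ⟨i, hilen⟩ (Nat.zero_le _)
        simp only [List.get_eq_getElem] at this
        rw [ha] at this
        rw [← hl0]
        simpa using this
      split
      · exact le_trans (min_le_left _ _) (by omega)
      · omega
    · rw [if_neg haD]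
      by_cases hy : y < L.length
      · rw [dif_pos hy]
        have hiy : y ≤ i := by
          by_contra hlt
          push_neg at hlt
          apply haD
          rw [hmemD0]
          have : i < (L.take y).length := by rw [List.length_take]; omega
          have : (L.take y)[i] ∈ L.take y := List.getElem_mem this
          rwa [List.getElem_take, ha] at this
        have := hmono ⟨y, hy⟩ ⟨i, hilen⟩ hiy
        simp only [List.get_eq_getElem] at this ⊢
        rw [ha] at this
        exact le_trans (min_le_right _ _) (by omega)
      · exfalso
        apply haD
        rw [hmemD0, List.take_of_length_le (by omega)]
        exact haL
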